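/- There is a consistent extension of ZFC in which there exist two ultraproducts over ℕ (with respect to non-principal ultrafilters), both of cardinality 2^ω, that are elementarily equivalent but not isomorphic. Concretely: if 2^{ω₂} = 2^ω, then for the two-sorted structure 𝔄 given by ω₁ together with its finite subsets and the membership relation E, and any ω₂-saturated elementary extension 𝔅 of 𝔄 of cardinality at most 2^ω, the ultrapowers 𝔄^ℕ/𝒰₁ and 𝔅^ℕ/𝒰₂ (for any non-principal ultrafilters 𝒰₁, 𝒰₂ on ℕ) are elementarily equivalent but not isomorphic. -/

import Mathlib

open FirstOrder Language Structure Filter Set Cardinal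

universe u v w x

namespace UP

variable {L : FirstOrder.Language.{u, v}}

/-- Quantifier rank of a bounded formula. -/
def qr {L : FirstOrder.Language} {α : Type*} : ∀ {n : ℕ}, L.BoundedFormula α n → ℕ
  | _, .falsum => 0
  | _, .equal _ _ => 0
  | _, .rel _ _ => 0
  | _, .imp f g => max (qr f) (qr g)
  | _, .all f => qr f + 1

/-- `m`-equivalence: agreement on all sentences of quantifier rank at most `m`. -/
def MEquiv (L : FirstOrder.Language) (m : ℕ) (M : Type*) (N : Type*)
    [L.Structure M] [L.Structure N] : Prop :=
  ∀ φ : L.Sentence, qr φ ≤ m → (M ⊨ φ ↔ N ⊨ φ)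

/-- The Gaifman graph of a structure. -/
def gaifman (L : FirstOrder.Language) (M : Type*) [L.Structure M] : SimpleGraph M where
  Adj a b := a ≠ b ∧ ∃ (n : ℕ) (r : L.Relations n) (x : Fin n → M),
      RelMap r x ∧ a ∈ Set.range x ∧ b ∈ Set.range x
  symm := ⟨fun a b ⟨h, n, r, x, h1, h2, h3⟩ => ⟨h.symm, n, r, x, h1, h3, h2⟩⟩
  loopless := ⟨fun a ⟨h, _⟩ => h rfl⟩

/-- The `m`-ball around `a` with respect to Gaifman distance. -/
def ball (L : FirstOrder.Language) (M : Type*) [L.Structure M] (m : ℕ) (a : M) : Set M :=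
  {b | ∃ w : (gaifman L M).Walk a b, w.length ≤ m}

/-- The connected component of `a` in the Gaifman graph. -/
def component (L : FirstOrder.Language) (M : Type*) [L.Structure M] (a : M) : Set M :=
  {b | (gaifman L M).Reachable a b}

theorem self_mem_ball {L : FirstOrder.Language.{u, v}} {M : Type*} [L.Structure M] (m : ℕ) (a : M) : a ∈ ball L M m a :=
  ⟨SimpleGraph.Walk.nil, by simp⟩

theorem self_mem_component {M : Type*} [L.Structure M] (a : M) : a ∈ component L M a :=
  SimpleGraph.Reachable.refl a

/-- Induced structure on any subset (for relational languages). -/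
instance subStructure [L.IsRelational] {M : Type*} [L.Structure M] (s : Set M) :
    L.Structure s where
  funMap := fun f _ => isEmptyElim f
  RelMap := fun r x => RelMap r fun i => (x i : M)

/-- `a` has the `m`-ball type given by the pointed structure `(P, p)`. -/
def HasBallType (L : FirstOrder.Language.{u, v}) [L.IsRelational] {M : Type u}
    [L.Structure M] (m : ℕ) (a : M) (P : Type w) [L.Structure P] (p : P) : Prop :=
  ∃ g : ↥(ball L M m a) ≃[L] P, g ⟨a, self_mem_ball m a⟩ = p

/-- The number of elements of `M` of `m`-ball type `(P, p)`, as an extended natural number. -/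
noncomputable def ballTypeCount (L : FirstOrder.Language.{u, v}) [L.IsRelational]
    (M : Type u) [L.Structure M] (m : ℕ) (P : Type w) [L.Structure P] (p : P) : ℕ∞ :=
  {a : M | HasBallType L m a P p}.encard

/-- A Hanf sequence of `σ`-structures. -/
def IsHanfSequence (L : FirstOrder.Language.{u, v}) [L.IsRelational]
    (A : ℕ → Type u) [∀ i, L.Structure (A i)] : Prop :=
  (∀ i, #(A i) ≤ 2 ^ Cardinal.aleph0) ∧
  (∀ m : ℕ, ∃ e : ℕ, ∀ (i : ℕ) (a : A i), (ball L (A i) m a).encard ≤ e) ∧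
  (∀ (m : ℕ) (P : Type u) (_ : L.Structure P) (p : P),
     (∃ c : ℕ, ∀ᶠ i in Filter.atTop, ballTypeCount L (A i) m P p = c) ∨
     (∀ c : ℕ, ∀ᶠ i in Filter.atTop, (c : ℕ∞) < ballTypeCount L (A i) m P p))

/-- A back-and-forth system between `M` and `N`, as a set of pairs of finite tuples. -/
def IsBFSystem (L : FirstOrder.Language) (M : Type*) (N : Type*)
    [L.Structure M] [L.Structure N]
    (S : Set (Σ n : ℕ, (Fin n → M) × (Fin n → N))) : Prop :=
  (∀ q ∈ S, (∀ i j, q.2.1 i = q.2.1 j ↔ q.2.2 i = q.2.2 j) ∧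
    ∀ (k : ℕ) (r : L.Relations k) (f : Fin k → Fin q.1),
      (RelMap r (q.2.1 ∘ f) ↔ RelMap r (q.2.2 ∘ f))) ∧
  (∀ q ∈ S, ∀ a : M, ∃ b : N, (⟨q.1 + 1, Fin.snoc q.2.1 a, Fin.snoc q.2.2 b⟩ :
      Σ n : ℕ, (Fin n → M) × (Fin n → N)) ∈ S) ∧
  (∀ q ∈ S, ∀ b : N, ∃ a : M, (⟨q.1 + 1, Fin.snoc q.2.1 a, Fin.snoc q.2.2 b⟩ :
      Σ n : ℕ, (Fin n → M) × (Fin n → N)) ∈ S)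

/-- Two structures are partially isomorphic (back-and-forth equivalent). -/
def PartiallyIsomorphic (L : FirstOrder.Language) (M : Type*) (N : Type*)
    [L.Structure M] [L.Structure N] : Prop :=
  ∃ S, IsBFSystem L M N S ∧
    (⟨0, fun i => i.elim0, fun i => i.elim0⟩ : Σ n : ℕ, (Fin n → M) × (Fin n → N)) ∈ S

/-- Two pointed structures are partially isomorphic. -/
def PointedPartiallyIsomorphic (L : FirstOrder.Language) (M : Type*) (N : Type*)
    [L.Structure M] [L.Structure N] (a : M) (b : N) : Prop :=
  ∃ S, IsBFSystem L M N S ∧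
    (⟨1, fun _ => a, fun _ => b⟩ : Σ n : ℕ, (Fin n → M) × (Fin n → N)) ∈ S

/-- `κ`-saturation: every finitely realized type over fewer than `κ` parameters is realized. -/
def SaturatedAt (L : FirstOrder.Language) (κ : Cardinal.{0}) (M : Type*) [L.Structure M] : Prop :=
  ∀ (α : Type) (_ : #α < κ) (v : α → M) (Φ : Set (L.Formula (α ⊕ Unit))),
    (∀ F : Finset (L.Formula (α ⊕ Unit)), ↑F ⊆ Φ →
      ∃ x : M, ∀ φ ∈ F, φ.Realize (Sum.elim v fun _ => x)) →
    ∃ x : M, ∀ φ ∈ Φ, φ.Realize (Sum.elim v fun _ => x)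

end UP

open UP

/-- The two-sorted structure of `ω₁` together with its finite subsets, with the
membership relation interpreted by the single binary relation symbol. -/
instance memStructure (X : Type) : Language.graph.Structure (X ⊕ Finset X) where
  RelMap | .adj => fun x =>
    match x 0, x 1 with
    | Sum.inl a, Sum.inr s => a ∈ s
    | _, _ => False

section ShelahHelpers

open FirstOrder Language Structure Filter Set Cardinal

/-- Shorthand for the quotient map into a filter product. -/
def mkP {M : Type} (u : Ultrafilter ℕ) (f : ℕ → M) :
    (u : Filter ℕ).Product (fun _ : ℕ => M) :=
  Quotient.mk ((u : Filter ℕ).productSetoid fun _ : ℕ => M) f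

theorem mkP_surjective {M : Type} (u : Ultrafilter ℕ)
    (x : (u : Filter ℕ).Product (fun _ : ℕ => M)) : ∃ f, mkP u f = x :=
  Quotient.exists_rep x

theorem mkP_eq_iff {M : Type} (u : Ultrafilter ℕ) (f g : ℕ → M) :
    mkP u f = mkP u g ↔ ∀ᶠ n in (u : Filter ℕ), f n = g n :=
  Quotient.eq

theorem relMap_mkP {M : Type} [Nonempty M] [Language.graph.Structure M] (u : Ultrafilter ℕ)
    (f g : ℕ → M) :
    RelMap Language.adj ![mkP u f, mkP u g] ↔
      ∀ᶠ n in (u : Filter ℕ), RelMap Language.adj ![f n, g n] := by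
  have h := relMap_quotient_mk' (s := (u : Filter ℕ).productSetoid fun _ : ℕ => M)
      Language.adj ![f, g]
  have e : (fun i => (⟦(![f, g] : Fin 2 → ℕ → M) i⟧ :
      Quotient ((u : Filter ℕ).productSetoid fun _ : ℕ => M))) = ![mkP u f, mkP u g] := by
    funext i; fin_cases i <;> rfl
  rw [e] at h
  refine h.trans ?_
  refine Iff.trans (show _ ↔ ∀ᶠ n in (u : Filter ℕ),
      RelMap Language.adj fun i => (![f, g] : Fin 2 → ℕ → M) i n from Iff.rfl) ?_
  refine eventually_congr (Eventually.of_forall fun n => ?_)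
  have : (fun i => (![f, g] : Fin 2 → ℕ → M) i n) = ![f n, g n] := by
    funext i; fin_cases i <;> rfl
  rw [this]

theorem relMap_A {X : Type} (x : X) (s : Finset X) :
    RelMap Language.adj ![Sum.inl x, (Sum.inr s : X ⊕ Finset X)] ↔ x ∈ s :=
  Iff.rfl

theorem relMap_A_inl {X : Type} (a : X ⊕ Finset X) (y : X) :
    ¬ RelMap Language.adj ![a, (Sum.inl y : X ⊕ Finset X)] := by
  rcases a with x | s <;> exact fun h => h

theorem relMap_A_inr_left {X : Type} (s : Finset X) (b : X ⊕ Finset X) :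
    ¬ RelMap Language.adj ![(Sum.inr s : X ⊕ Finset X), b] := by
  rcases b with x | t <;> exact fun h => h

/-- The "set part" of an element of the two-sorted structure. -/
def toF {X : Type} : X ⊕ Finset X → Finset X
  | Sum.inl _ => ∅
  | Sum.inr s => s

theorem relMap_A_iff {X : Type} (a b : X ⊕ Finset X) :
    RelMap Language.adj ![a, b] ↔
      ∃ (x : X), a = Sum.inl x ∧ (∃ s : Finset X, b = Sum.inr s ∧ x ∈ s) := by
  rcases a with x | s
  · rcases b with y | t
    · exact iff_of_false (relMap_A_inl _ _) (by rintro ⟨x', -, s, h, -⟩; exact Sum.inl_ne_inr h)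
    · rw [relMap_A]
      constructor
      · intro h; exact ⟨x, rfl, t, rfl, h⟩
      · rintro ⟨x', hx, s, hs, h⟩
        obtain rfl : x = x' := by injection hx
        obtain rfl : t = s := by injection hs
        exact h
  · exact iff_of_false (relMap_A_inr_left _ _)
      (by rintro ⟨x', h, _⟩; exact Sum.inr_ne_inl h)

/-- The sentence asserting that any two elements have an `E`-"union". -/
def unionSentence : Language.graph.Sentence :=
  ∀' ∀' ∃' ∀' ((Language.adj.boundedFormula₂ &3 &0 ⊔ Language.adj.boundedFormula₂ &3 &1) ⟹
    Language.adj.boundedFormula₂ &3 &2)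

theorem realize_unionSentence (M : Type) [Language.graph.Structure M] :
    M ⊨ unionSentence ↔ ∀ s t : M, ∃ w : M, ∀ x : M,
      (RelMap Language.adj ![x, s] ∨ RelMap Language.adj ![x, t]) →
        RelMap Language.adj ![x, w] := by
  simp [unionSentence, Sentence.Realize, Formula.Realize, BoundedFormula.realize_all,
    BoundedFormula.realize_ex, BoundedFormula.realize_imp, BoundedFormula.realize_sup,
    BoundedFormula.realize_rel₂, Fin.snoc]

theorem A_realize_unionSentence (X : Type) : (X ⊕ Finset X) ⊨ unionSentence := by
  rw [realize_unionSentence]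
  intro s t
  classical
  refine ⟨Sum.inr (toF s ∪ toF t), fun a h => ?_⟩
  rcases h with h | h <;>
  · rw [relMap_A_iff] at h
    obtain ⟨x, rfl, s', rfl, hx⟩ := h
    exact (relMap_A _ _).2 (Finset.mem_union.2 (by simp [toF, hx]))

theorem finite_cover {B : Type} [Nonempty B] [Language.graph.Structure B]
    (hB : B ⊨ unionSentence) (s : Set B) (hs : s.Finite)
    (h : ∀ a ∈ s, ∃ y, RelMap Language.adj ![a, y]) :
    ∃ y, ∀ a ∈ s, RelMap Language.adj ![a, y] := by
  rw [realize_unionSentence] at hB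
  refine Set.Finite.induction_on_subset (motive := fun s _ => ∃ y, ∀ a ∈ s, RelMap Language.adj ![a, y]) s hs
    ⟨Classical.arbitrary B, fun a ha => absurd ha (Set.notMem_empty a)⟩ ?_
  rintro a t haS - - ⟨y, hy⟩
  obtain ⟨ta, hta⟩ := h a haS
  obtain ⟨w, hw⟩ := hB y ta
  refine ⟨w, fun b hb => ?_⟩
  rcases Set.mem_insert_iff.1 hb with rfl | hb
  · exact hw b (Or.inr hta)
  · exact hw b (Or.inl (hy b hb))

theorem comp_matrix₂ {α β : Type*} (f : α → β) (a b : α) : f ∘ ![a, b] = ![f a, f b] := by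
  funext i; fin_cases i <;> rfl

theorem card_product_le {M : Type} (u : Ultrafilter ℕ) :
    #((u : Filter ℕ).Product (fun _ : ℕ => M)) ≤ #M ^ Cardinal.aleph0 := by
  have h : #((u : Filter ℕ).Product (fun _ : ℕ => M)) ≤ #(ℕ → M) := Cardinal.mk_quotient_le
  rwa [← Cardinal.power_def, Cardinal.mk_nat] at h

theorem card_product_ge {M : Type} (u : Ultrafilter ℕ) (hu : (u : Filter ℕ) ≤ Filter.cofinite)
    (e : ℕ ↪ M) : 2 ^ Cardinal.aleph0 ≤ #((u : Filter ℕ).Product (fun _ : ℕ => M)) := by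
  have key : Function.Injective (fun g : ℕ → Bool =>
      mkP u (fun n => e (Encodable.encode (List.map g (List.range n))))) := by
    intro g h hgh
    by_contra hne
    obtain ⟨i₀, hi₀⟩ : ∃ i, g i ≠ h i := by
      by_contra hc; push_neg at hc; exact hne (funext hc)
    simp only [mkP_eq_iff] at hgh
    have hsub : {n | e (Encodable.encode (List.map g (List.range n))) =
        e (Encodable.encode (List.map h (List.range n)))} ⊆ {n | n ≤ i₀} := by
      intro n hn
      simp only [Set.mem_setOf_eq] at hn ⊢
      by_contra hlt
      push_neg at hlt
      have hl : List.map g (List.range n) = List.map h (List.range n) :=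
        Encodable.encode_injective (e.injective hn)
      have hgi : (List.map g (List.range n))[i₀]? = (List.map h (List.range n))[i₀]? := by
        rw [hl]
      simp only [List.getElem?_map, List.getElem?_range, hlt, Option.map_some] at hgi
      exact hi₀ (Option.some.injEq .. ▸ hgi)
    have hfin : {n | e (Encodable.encode (List.map g (List.range n))) =
        e (Encodable.encode (List.map h (List.range n)))}.Finite :=
      (Set.finite_le_nat i₀).subset hsub
    have hcompl : {n | e (Encodable.encode (List.map g (List.range n))) =
        e (Encodable.encode (List.map h (List.range n)))}ᶜ ∈ (u : Filter ℕ) :=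
      hu (by rw [Filter.mem_cofinite, _root_.compl_compl]; exact hfin)
    have : (∅ : Set ℕ) ∈ (u : Filter ℕ) := by
      have := Filter.inter_mem hgh hcompl
      rwa [Set.inter_compl_self] at this
    exact Filter.empty_notMem (u : Filter ℕ) this
  have hle := Cardinal.mk_le_of_injective key
  calc (2 : Cardinal) ^ Cardinal.aleph0 = #(ℕ → Bool) := by
        rw [← Cardinal.mk_bool, ← Cardinal.mk_nat, Cardinal.power_def]
    _ ≤ _ := hle

end ShelahHelpers

theorem elementarilyEquivalent_not_isomorphic_ultrapowers
    (hEaston : (2 : Cardinal.{0}) ^ (Cardinal.aleph 2) = 2 ^ Cardinal.aleph0)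
    (X : Type) (hX : #X = Cardinal.aleph 1)
    (B : Type) [Language.graph.Structure B]
    (emb : (X ⊕ Finset X) ↪ₑ[Language.graph] B)
    (hBcard : #B ≤ 2 ^ Cardinal.aleph0)
    (hBsat : SaturatedAt Language.graph (Cardinal.aleph 2) B)
    (u₁ u₂ : Ultrafilter ℕ) (hu₁ : (u₁ : Filter ℕ) ≤ Filter.cofinite)
    (hu₂ : (u₂ : Filter ℕ) ≤ Filter.cofinite) :
    #((u₁ : Filter ℕ).Product (fun _ : ℕ => X ⊕ Finset X)) = 2 ^ Cardinal.aleph0 ∧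
    #((u₂ : Filter ℕ).Product (fun _ : ℕ => B)) = 2 ^ Cardinal.aleph0 ∧
    ((u₁ : Filter ℕ).Product (fun _ : ℕ => X ⊕ Finset X) ≅[Language.graph]
      (u₂ : Filter ℕ).Product (fun _ : ℕ => B)) ∧
    ¬ Nonempty ((u₁ : Filter ℕ).Product (fun _ : ℕ => X ⊕ Finset X) ≃[Language.graph]
      (u₂ : Filter ℕ).Product (fun _ : ℕ => B)) := by
  classical
  haveI hXne : Nonempty X := Cardinal.mk_ne_zero_iff.1 (by rw [hX]; exact (Cardinal.aleph_pos 1).ne')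
  haveI : Infinite X := Cardinal.infinite_iff.2 (by rw [hX]; exact Cardinal.aleph0_le_aleph 1)
  haveI : Nonempty (X ⊕ Finset X) := ⟨Sum.inr ∅⟩
  haveI : Infinite (X ⊕ Finset X) := Sum.infinite_of_left
  haveI : Infinite B := Infinite.of_injective emb emb.toEmbedding.injective
  have hAcard : #(X ⊕ Finset X) = Cardinal.aleph 1 := by
    simp only [Cardinal.mk_sum, Cardinal.mk_finset_of_infinite, Cardinal.lift_id, hX]
    exact Cardinal.add_eq_self (Cardinal.aleph0_le_aleph 1)
  have hpow : (Cardinal.aleph 1) ^ Cardinal.aleph0 ≤ 2 ^ Cardinal.aleph0 := by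
    calc (Cardinal.aleph 1) ^ Cardinal.aleph0
        ≤ (2 ^ Cardinal.aleph 1) ^ Cardinal.aleph0 :=
          Cardinal.power_le_power_right (Cardinal.cantor _).le
      _ = 2 ^ (Cardinal.aleph 1 * Cardinal.aleph0) := Cardinal.power_mul.symm
      _ = 2 ^ Cardinal.aleph 1 := by
          rw [Cardinal.mul_eq_max (Cardinal.aleph0_le_aleph 1) le_rfl,
            max_eq_left (Cardinal.aleph0_le_aleph 1)]
      _ ≤ 2 ^ Cardinal.aleph 2 :=
          Cardinal.power_le_power_left two_ne_zero (Cardinal.aleph_le_aleph.2 one_le_two)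
      _ = 2 ^ Cardinal.aleph0 := hEaston
  have hcard₁ : #((u₁ : Filter ℕ).Product (fun _ : ℕ => X ⊕ Finset X)) = 2 ^ Cardinal.aleph0 := by
    refine le_antisymm ?_ (card_product_ge u₁ hu₁ (Infinite.natEmbedding _))
    calc #((u₁ : Filter ℕ).Product (fun _ : ℕ => X ⊕ Finset X))
        ≤ #(X ⊕ Finset X) ^ Cardinal.aleph0 := card_product_le u₁
      _ = (Cardinal.aleph 1) ^ Cardinal.aleph0 := by rw [hAcard]
      _ ≤ 2 ^ Cardinal.aleph0 := hpow
  have hcard₂ : #((u₂ : Filter ℕ).Product (fun _ : ℕ => B)) = 2 ^ Cardinal.aleph0 := by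
    refine le_antisymm ?_ (card_product_ge u₂ hu₂ (Infinite.natEmbedding _))
    calc #((u₂ : Filter ℕ).Product (fun _ : ℕ => B))
        ≤ #B ^ Cardinal.aleph0 := card_product_le u₂
      _ ≤ (2 ^ Cardinal.aleph0) ^ Cardinal.aleph0 := Cardinal.power_le_power_right hBcard
      _ = 2 ^ (Cardinal.aleph0 * Cardinal.aleph0) := Cardinal.power_mul.symm
      _ = 2 ^ Cardinal.aleph0 := by rw [Cardinal.aleph0_mul_aleph0]
  have hequiv : ((u₁ : Filter ℕ).Product (fun _ : ℕ => X ⊕ Finset X) ≅[Language.graph]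
      (u₂ : Filter ℕ).Product (fun _ : ℕ => B)) := by
    refine (Language.elementarilyEquivalent_iff).2 fun φ => ?_
    rw [Ultraproduct.sentence_realize, Ultraproduct.sentence_realize,
      Filter.eventually_const, Filter.eventually_const]
    exact emb.map_sentence φ
  refine ⟨hcard₁, hcard₂, hequiv, ?_⟩
  rintro ⟨g⟩
  obtain ⟨x₀⟩ := hXne
  have ha₀ : RelMap Language.adj ![emb (Sum.inl x₀), emb (Sum.inr {x₀})] := by
    rw [← comp_matrix₂ emb]
    exact (emb.map_rel _ _).2 ((relMap_A x₀ {x₀}).2 (Finset.mem_singleton_self x₀))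
  set cA : X → (u₁ : Filter ℕ).Product (fun _ : ℕ => X ⊕ Finset X) :=
    fun x => mkP u₁ (fun _ : ℕ => (Sum.inl x : X ⊕ Finset X)) with hcA
  have hatomA : ∀ x : X,
      RelMap Language.adj ![cA x, mkP u₁ (fun _ : ℕ => (Sum.inr {x} : X ⊕ Finset X))] :=
    fun x => (relMap_mkP u₁ _ _).2 (Filter.Eventually.of_forall fun _ =>
      (relMap_A _ _).2 (Finset.mem_singleton_self x))
  have hatomB : ∀ x : X, ∃ t, RelMap Language.adj ![g (cA x), t] := fun x =>
    ⟨g (mkP u₁ (fun _ : ℕ => (Sum.inr {x} : X ⊕ Finset X))), by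
      rw [← comp_matrix₂ g]; exact (g.map_rel _ _).2 (hatomA x)⟩
  choose f hf using fun x : X => mkP_surjective u₂ (g (cA x))
  have hae : ∀ x : X, ∀ᶠ n in (u₂ : Filter ℕ), ∃ y, RelMap Language.adj ![f x n, y] := by
    intro x
    obtain ⟨t, ht⟩ := hatomB x
    obtain ⟨ht', hht⟩ := mkP_surjective u₂ t
    rw [← hf x, ← hht, relMap_mkP] at ht
    exact ht.mono fun n hn => ⟨ht' n, hn⟩
  set f' : X → ℕ → B := fun x n =>
    if h : ∃ y, RelMap Language.adj ![f x n, y] then f x n else emb (Sum.inl x₀) with hf'def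
  have hf' : ∀ x, mkP u₂ (f' x) = g (cA x) := by
    intro x
    rw [← hf x, mkP_eq_iff]
    exact (hae x).mono fun n hn => by simp only [hf'def, dif_pos hn]
  have hf'atom : ∀ x n, ∃ y, RelMap Language.adj ![f' x n, y] := by
    intro x n
    by_cases h : ∃ y, RelMap Language.adj ![f x n, y]
    · simpa only [hf'def, dif_pos h] using h
    · exact ⟨emb (Sum.inr {x₀}), by simp only [hf'def, dif_neg h]; exact ha₀⟩
  have hB_union : B ⊨ unionSentence := (emb.map_sentence unionSentence).1
    (A_realize_unionSentence X)
  have hXcard : #X < Cardinal.aleph 2 := by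
    rw [hX]; exact Cardinal.aleph_lt_aleph.2 one_lt_two
  have hsn : ∀ n : ℕ, ∃ s : B, ∀ x : X, RelMap Language.adj ![f' x n, s] := by
    intro n
    set φ : X → Language.graph.Formula (X ⊕ Unit) := fun x =>
      Language.adj.formula₂ (Term.var (Sum.inl x)) (Term.var (Sum.inr ())) with hφ
    have hφ_realize : ∀ (x : X) (v : X → B) (y : B),
        (φ x).Realize (Sum.elim v fun _ => y) ↔ RelMap Language.adj ![v x, y] := by
      intro x v y
      rw [hφ]
      simp [Formula.realize_rel₂, Term.realize_var]
    have hfinsat : ∀ F : Finset (Language.graph.Formula (X ⊕ Unit)), ↑F ⊆ Set.range φ →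
        ∃ y : B, ∀ ψ ∈ F, ψ.Realize (Sum.elim (fun x => f' x n) fun _ => y) := by
      intro F hF
      choose cx hcx using fun ψ : {ψ // ψ ∈ F} => Set.mem_range.1 (hF ψ.2)
      obtain ⟨y, hy⟩ := finite_cover hB_union
        (Set.range fun ψ : {ψ // ψ ∈ F} => f' (cx ψ) n) (Set.finite_range _)
        (by rintro b ⟨ψ, rfl⟩; exact hf'atom _ n)
      refine ⟨y, fun ψ hψ => ?_⟩
      have hcx' : φ (cx ⟨ψ, hψ⟩) = ψ := hcx ⟨ψ, hψ⟩
      rw [← hcx']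
      exact (hφ_realize (cx ⟨ψ, hψ⟩) _ y).2 (hy (f' (cx ⟨ψ, hψ⟩) n) ⟨⟨ψ, hψ⟩, rfl⟩)
    obtain ⟨y, hy⟩ := hBsat X hXcard (fun x => f' x n) (Set.range φ) hfinsat
    exact ⟨y, fun x => (hφ_realize x _ y).1 (hy (φ x) (Set.mem_range_self x))⟩
  choose s hs using hsn
  have hcovB : ∀ x : X, RelMap Language.adj ![g (cA x), mkP u₂ s] := fun x => by
    rw [← hf' x, relMap_mkP]
    exact Filter.Eventually.of_forall fun n => hs n x
  have hcovA : ∀ x : X, RelMap Language.adj ![cA x, g.symm (mkP u₂ s)] := by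
    intro x
    have h := (g.symm.map_rel Language.adj ![g (cA x), mkP u₂ s]).2 (hcovB x)
    rw [comp_matrix₂, g.symm_apply_apply] at h
    exact h
  obtain ⟨T, hT⟩ := mkP_surjective u₁ (g.symm (mkP u₂ s))
  have hmem : ∀ x : X, ∃ n, x ∈ toF (T n) := by
    intro x
    have h := hcovA x
    rw [← hT, relMap_mkP] at h
    obtain ⟨n, hn⟩ := h.exists
    rw [relMap_A_iff] at hn
    obtain ⟨x', hx', s', hs', hxs⟩ := hn
    obtain rfl : x = x' := by injection hx'
    exact ⟨n, by rw [hs']; exact hxs⟩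
  have hcount : (Set.univ : Set X).Countable := by
    have hsubU : (Set.univ : Set X) ⊆ ⋃ n, (toF (T n) : Set X) := fun x _ => by
      obtain ⟨n, hn⟩ := hmem x
      exact Set.mem_iUnion.2 ⟨n, hn⟩
    exact (Set.countable_iUnion fun n => (toF (T n)).countable_toSet).mono hsubU
  haveI : Countable X := Set.countable_univ_iff.1 hcount
  have hle : #X ≤ Cardinal.aleph0 := Cardinal.mk_le_aleph0
  rw [hX] at hle
  refine absurd hle (not_le.2 ?_)
  rw [← Cardinal.aleph_zero]
  exact Cardinal.aleph_lt_aleph.2 zero_lt_one
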